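/- Let N = 1 and let Φ = (f_n)_{n≥2} where f_n is the tower of exponentiations of height n−1 (f_2(k)=k, f_{n+1}(k)=k^{f_n(k)}). Then for every strictly increasing sequence (a_n) of naturals ≥ 2 and every n, EXP(a_1,...,a_n) ⊆ EXP_{1,Φ}(a_1,...,a_n), where EXP_{N,Φ}(a_1,...,a_i) = { a_i^(∏_{t=1}^{i-1} a_t^{λ_t}) : 0 ≤ λ_1 ≤ N, 0 ≤ λ_t ≤ f_t(a_{t-1}) for 2 ≤ t ≤ i−1 }. -/

import Mathlib

/-- The sets of exponentiations: `EXP a 1 = {a 1}` and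
`EXP a i = { a i ^ (e_{i-1} ⋯ e_1) | e_t ∈ EXP a t ∪ {1} for 1 ≤ t < i }`. -/
def EXP (a : ℕ → ℕ) (i : ℕ) : Set ℕ :=
  { x | ∃ e : ℕ → ℕ, (∀ t, 0 < t → t < i → e t ∈ EXP a t ∪ {1}) ∧
      x = a i ^ ∏ t ∈ Finset.Ico 1 i, e t }
termination_by i

/-- The enlarged sets of exponentiations `EXP_{N,Φ}(a_1, ..., a_i)`: all
`a_i ^ (∏_{t=1}^{i-1} a_t ^ λ_t)` with `0 ≤ λ_1 ≤ N` and
`0 ≤ λ_t ≤ f_t(a_{t-1})` for `2 ≤ t ≤ i - 1`. -/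
def EXPNPhi (N : ℕ) (f : ℕ → ℕ → ℕ) (a : ℕ → ℕ) (i : ℕ) : Set ℕ :=
  { x | ∃ lam : ℕ → ℕ, lam 1 ≤ N ∧
      (∀ t, 2 ≤ t → t ≤ i - 1 → lam t ≤ f t (a (t - 1))) ∧
      x = a i ^ ∏ t ∈ Finset.Ico 1 i, a t ^ lam t }

section Aux

variable {f : ℕ → ℕ → ℕ} (hf2 : ∀ k, f 2 k = k)
  (hfsucc : ∀ j, 2 ≤ j → ∀ k, f (j + 1) k = k ^ f j k)

include hf2 hfsucc

lemma aux_f_two_le : ∀ j, 2 ≤ j → ∀ k, 2 ≤ k → 2 ≤ f j k := by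
  intro j hj
  induction j, hj using Nat.le_induction with
  | base => intro k hk; rw [hf2]; exact hk
  | succ j hj ih =>
    intro k hk
    rw [hfsucc j hj]
    calc 2 ≤ k := hk
    _ = k ^ 1 := (pow_one k).symm
    _ ≤ k ^ f j k := Nat.pow_le_pow_right (by omega) (by have := ih k hk; omega)

lemma aux_f_strict : ∀ j, 2 ≤ j → ∀ k l, 2 ≤ k → k < l → f j k < f j l := by
  intro j hj
  induction j, hj using Nat.le_induction with
  | base => intro k l hk hkl; rw [hf2, hf2]; exact hkl
  | succ j hj ih =>
    intro k l hk hkl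
    rw [hfsucc j hj, hfsucc j hj]
    have h1 : 2 ≤ f j k := aux_f_two_le hf2 hfsucc j hj k hk
    have h2 : f j k < f j l := ih k l hk hkl
    calc k ^ f j k < l ^ f j k := Nat.pow_lt_pow_left hkl (by omega)
    _ ≤ l ^ f j l := Nat.pow_le_pow_right (by omega) (le_of_lt h2)

/-- doubling: for `j ≥ 3`, `2 * f j k ≤ f j l` when `2 ≤ k < l`. -/
lemma aux_f_double : ∀ j, 3 ≤ j → ∀ k l, 2 ≤ k → k < l → 2 * f j k ≤ f j l := by
  intro j hj k l hk hkl
  obtain ⟨i, hi, rfl⟩ : ∃ i, 2 ≤ i ∧ j = i + 1 := ⟨j - 1, by omega, by omega⟩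
  rw [hfsucc i hi, hfsucc i hi]
  have h2 : f i k < f i l := aux_f_strict hf2 hfsucc i hi k l hk hkl
  calc 2 * k ^ f i k ≤ 2 * l ^ f i k := by
        exact Nat.mul_le_mul_left 2 (Nat.pow_le_pow_left (by omega) _)
  _ ≤ l * l ^ f i k := Nat.mul_le_mul_right _ (by omega)
  _ = l ^ (f i k + 1) := by ring
  _ ≤ l ^ f i l := Nat.pow_le_pow_right (by omega) (by omega)

variable {a : ℕ → ℕ} (hmono : StrictMono a) (ha : ∀ t, 2 ≤ a t)

include hmono ha

/-- Key bound: admissible products of powers are bounded by `f t (a (t-1))`. -/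
lemma aux_key : ∀ t, 2 ≤ t → ∀ μ : ℕ → ℕ, μ 1 ≤ 1 →
    (∀ s, 2 ≤ s → s ≤ t - 1 → μ s ≤ f s (a (s - 1))) →
    ∏ s ∈ Finset.Ico 1 t, a s ^ μ s ≤ f t (a (t - 1)) := by
  intro t ht
  induction t, ht using Nat.le_induction with
  | base =>
    intro μ h1 _
    rw [show Finset.Ico 1 2 = {1} from rfl, Finset.prod_singleton, hf2]
    interval_cases h : μ 1
    · simpa using (by have := ha 1; omega : 1 ≤ a 1)
    · simp
  | succ t ht ih =>
    intro μ h1 hb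
    have hprod : ∏ s ∈ Finset.Ico 1 (t + 1), a s ^ μ s
        = (∏ s ∈ Finset.Ico 1 t, a s ^ μ s) * a t ^ μ t := by
      rw [Finset.prod_Ico_succ_top (by omega)]
    set m := f t (a (t - 1)) with hm
    set M := f t (a t) with hM
    have hP : ∏ s ∈ Finset.Ico 1 t, a s ^ μ s ≤ m :=
      ih μ h1 (fun s hs hs' => hb s hs (by omega))
    have hμt : μ t ≤ m := hb t ht (by omega)
    have hmM : m < M := aux_f_strict hf2 hfsucc t ht _ _ (ha _) (hmono (by omega))
    have hm2 : 2 ≤ m := aux_f_two_le hf2 hfsucc t ht _ (ha _)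
    have hstep : m ≤ a t ^ (M - m) := by
      rcases eq_or_lt_of_le ht with h2 | h3
    -- t = 2 : m = a 1 ≤ a 2 ≤ a 2 ^ (M - m)
      · subst h2
        have : m = a 1 := by rw [hm, hf2]
        calc m = a 1 := this
        _ ≤ a 2 := le_of_lt (hmono (by omega))
        _ = a 2 ^ 1 := (pow_one _).symm
        _ ≤ a 2 ^ (M - m) := Nat.pow_le_pow_right (by have := ha 2; omega) (by omega)
      -- t ≥ 3 : 2m ≤ M, so m ≤ 2^m ≤ a t ^ m ≤ a t ^ (M - m)
      · have hd : 2 * m ≤ M :=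
          aux_f_double hf2 hfsucc t (by omega) _ _ (ha _) (hmono (by omega))
        calc m ≤ 2 ^ m := le_of_lt (Nat.lt_two_pow_self (n := m))
        _ ≤ a t ^ m := Nat.pow_le_pow_left (ha t) m
        _ ≤ a t ^ (M - m) := Nat.pow_le_pow_right (by have := ha t; omega) (by omega)
    calc ∏ s ∈ Finset.Ico 1 (t + 1), a s ^ μ s
        ≤ m * a t ^ μ t := by rw [hprod]; exact Nat.mul_le_mul_right _ hP
    _ ≤ m * a t ^ m := Nat.mul_le_mul_left _ (Nat.pow_le_pow_right (by have := ha t; omega) hμt)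
    _ ≤ a t ^ (M - m) * a t ^ m := Nat.mul_le_mul_right _ hstep
    _ = a t ^ M := by rw [← pow_add]; congr 1; omega
    _ = f (t + 1) (a t) := (hfsucc t ht (a t)).symm
    _ = f (t + 1) (a (t + 1 - 1)) := by simp

/-- Structural decomposition lemma. -/
lemma aux_P : ∀ n, ∀ e : ℕ → ℕ, (∀ t, 0 < t → t < n → e t ∈ EXP a t ∪ {1}) →
    ∃ lam : ℕ → ℕ, lam 1 ≤ 1 ∧
      (∀ t, 2 ≤ t → t ≤ n - 1 → lam t ≤ f t (a (t - 1))) ∧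
      ∏ t ∈ Finset.Ico 1 n, e t = ∏ t ∈ Finset.Ico 1 n, a t ^ lam t := by
  intro n
  induction n using Nat.strong_induction_on with
  | _ n IH =>
    intro e he
    rcases le_or_gt n 1 with hn | hn
    · refine ⟨fun _ => 0, Nat.zero_le 1, fun t ht ht' => by omega, ?_⟩
      have : Finset.Ico 1 n = ∅ := by
        apply Finset.Ico_eq_empty; omega
      simp [this]
    · -- n ≥ 2
      have h : ∀ t, ∃ m, 0 < t → t < n → e t = a t ^ m ∧ (t = 1 → m ≤ 1) ∧
          (2 ≤ t → m ≤ f t (a (t - 1))) := by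
        intro t
        by_cases htr : 0 < t ∧ t < n
        · obtain ⟨ht0, htn⟩ := htr
          rcases he t ht0 htn with hmem | h1
          · -- e t ∈ EXP a t
            rw [EXP] at hmem
            obtain ⟨e', he', hval⟩ := hmem
            obtain ⟨lam', hl1, hlb, hleq⟩ := IH t htn e' he'
            refine ⟨∏ s ∈ Finset.Ico 1 t, a s ^ lam' s, fun _ _ => ⟨by rw [hval, hleq], ?_, ?_⟩⟩
            · intro ht1; subst ht1; simp
            · intro ht2
              exact aux_key hf2 hfsucc hmono ha t ht2 lam' hl1 hlb
          · -- e t = 1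
            refine ⟨0, fun _ _ => ⟨by simpa using h1, fun _ => Nat.zero_le 1, fun _ => Nat.zero_le _⟩⟩
        · exact ⟨0, fun h1 h2 => absurd ⟨h1, h2⟩ htr⟩
      choose m hm using h
      refine ⟨m, (hm 1 (by omega) hn).2.1 rfl, ?_, ?_⟩
      · intro t ht ht'
        exact (hm t (by omega) (by omega)).2.2 ht
      · refine Finset.prod_congr rfl fun t htmem => ?_
        rw [Finset.mem_Ico] at htmem
        exact (hm t (by omega) (by omega)).1

end Aux

/-- With `N = 1` and `Φ = (f_n)` the tower functions of height `n-1`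
(`f_2(k) = k`, `f_{n+1}(k) = k ^ f_n(k)`), for every strictly increasing
sequence of naturals `≥ 2` one has `EXP(a_1,...,a_n) ⊆ EXP_{1,Φ}(a_1,...,a_n)`. -/
theorem EXP_subset_EXPNPhi (f : ℕ → ℕ → ℕ)
    (hf2 : ∀ k, f 2 k = k)
    (hfsucc : ∀ j, 2 ≤ j → ∀ k, f (j + 1) k = k ^ f j k)
    (a : ℕ → ℕ) (hmono : StrictMono a) (ha : ∀ t, 2 ≤ a t) :
    ∀ n, 1 ≤ n → EXP a n ⊆ EXPNPhi 1 f a n := by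
  intro n _ x hx
  rw [EXP] at hx
  obtain ⟨e, he, hval⟩ := hx
  obtain ⟨lam, hl1, hlb, hleq⟩ := aux_P hf2 hfsucc hmono ha n e he
  exact ⟨lam, hl1, hlb, by rw [hval, hleq]⟩
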